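/- If an open graph (G, I, O) has a gflow, then it has no nonempty internal set: every W ⊆ Oᶜ with Odd(W) ⊆ W ∪ I is empty. -/

import Mathlib

open scoped Classical
noncomputable section

variable {V : Type*} [Fintype V] [DecidableEq V]

/-- Odd neighborhood: vertices with an odd number of neighbors in `S`. -/
def oddNbhd (G : SimpleGraph V) (S : Finset V) : Finset V :=
  Finset.univ.filter fun v => Odd (S.filter (G.Adj v)).card

/-- `(g, r)` is a gflow of the open graph `(G, I, O)`. -/
def IsGflow (G : SimpleGraph V) (I O : Finset V)
    (g : V → Finset V) (r : V → V → Prop) : Prop :=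
  IsStrictOrder V r ∧
  ∀ u ∉ O,
    g u ⊆ Iᶜ ∧
    (∀ v ∈ g u, r u v) ∧
    u ∈ oddNbhd G (g u) ∧
    (∀ v ∈ oddNbhd G (g u), v ≠ u → r u v)

def HasGflow (G : SimpleGraph V) (I O : Finset V) : Prop :=
  ∃ g r, IsGflow G I O g r

/-- `g` is a focused gflow of the open graph `(G, I, O)`. -/
def IsFocusedGflow (G : SimpleGraph V) (I O : Finset V) (g : V → Finset V) : Prop :=
  (∀ u, ¬ Relation.TransGen (fun a b => a ∉ O ∧ b ∈ g a) u u) ∧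
  ∀ u ∉ O, g u ⊆ Iᶜ ∧ oddNbhd G (g u) ∩ Oᶜ = {u}

private lemma zmod2_of_even {n : ℕ} (h : Even n) : (n : ZMod 2) = 0 := by
  obtain ⟨k, rfl⟩ := h
  push_cast
  ring_nf
  simp [show (2 : ZMod 2) = 0 from rfl]

private lemma zmod2_of_odd {n : ℕ} (h : Odd n) : (n : ZMod 2) = 1 := by
  obtain ⟨k, rfl⟩ := h
  push_cast
  ring_nf
  simp [show (2 : ZMod 2) = 0 from rfl]

private lemma mem_oddNbhd {G : SimpleGraph V} {S : Finset V} {v : V} :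
    v ∈ oddNbhd G S ↔ Odd (S.filter (G.Adj v)).card := by
  simp [oddNbhd]

theorem no_internal_set_of_hasGflow (G : SimpleGraph V) (I O : Finset V)
    (h : HasGflow G I O) :
    ∀ W ⊆ Oᶜ, oddNbhd G W ⊆ W ∪ I → W = ∅ := by
  obtain ⟨g, r, ⟨hord, hflow⟩⟩ := h
  intro W hWO hOdd
  by_contra hne
  have hWne : W.Nonempty := Finset.nonempty_iff_ne_empty.mpr hne
  -- r-maximal element of W
  have hwf : WellFounded (flip r) := by
    haveI : IsTrans V (flip r) := ⟨fun a b c hab hbc => hord.2.trans _ _ _ hbc hab⟩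
    haveI : IsIrrefl V (flip r) := ⟨fun a => hord.1.irrefl a⟩
    exact Finite.wellFounded_of_trans_of_irrefl _
  obtain ⟨u, huW, humax⟩ := hwf.has_min (↑W : Set V) ⟨hWne.choose, hWne.choose_spec⟩
  have humax' : ∀ w ∈ W, ¬ r u w := fun w hw => humax w hw
  have huO : u ∉ O := by
    have := hWO huW; simpa using this
  obtain ⟨hgI, hgr, huodd, hoddr⟩ := hflow u huO
  set A := g u with hA
  -- double counting mod 2
  have hnat : ∑ a ∈ A, (W.filter (G.Adj a)).card
      = ∑ w ∈ W, (A.filter (G.Adj w)).card := by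
    simp_rw [Finset.card_filter]
    rw [Finset.sum_comm]
    exact Finset.sum_congr rfl fun w _ => Finset.sum_congr rfl fun a _ => by
      rw [G.adj_comm]
  have hkey : ∑ a ∈ A, ((W.filter (G.Adj a)).card : ZMod 2)
      = ∑ w ∈ W, ((A.filter (G.Adj w)).card : ZMod 2) := by
    rw [← Nat.cast_sum, ← Nat.cast_sum, hnat]
  -- LHS is 0
  have hL : ∑ a ∈ A, ((W.filter (G.Adj a)).card : ZMod 2) = 0 := by
    apply Finset.sum_eq_zero
    intro a ha
    apply zmod2_of_even
    rw [← Nat.not_odd_iff_even]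
    intro hodda
    have haOdd : a ∈ oddNbhd G W := mem_oddNbhd.mpr hodda
    have : a ∈ W ∪ I := hOdd haOdd
    have haI : a ∉ I := by
      have := hgI ha; simpa using this
    have haW : a ∈ W := by
      rcases Finset.mem_union.mp this with h' | h'
      · exact h'
      · exact absurd h' haI
    exact humax' a haW (hgr a ha)
  -- RHS is 1
  have hR : ∑ w ∈ W, ((A.filter (G.Adj w)).card : ZMod 2) = 1 := by
    rw [Finset.sum_eq_single u]
    · exact zmod2_of_odd (mem_oddNbhd.mp huodd)
    · intro w hw hwu
      apply zmod2_of_even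
      rw [← Nat.not_odd_iff_even]
      intro hoddw
      exact humax' w hw (hoddr w (mem_oddNbhd.mpr hoddw) hwu)
    · intro hu; exact absurd huW hu
  rw [hL, hR] at hkey
  exact one_ne_zero hkey.symm
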